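/- Let G_1, …, G_n be pairwise disjoint connected graphs with chosen vertices x_i ∈ V(G_i), and let B(G_1,…,G_n) be the bouquet obtained by identifying all x_i into one vertex. Then (Σ_{i=1}^n γ_sp(G_i)) − n + 1 ≤ γ_sp(B(G_1,…,G_n)) ≤ Σ_{i=1}^n γ_sp(G_i). -/

import Mathlib

/-- `S` is a super dominating set of `G`: it is dominating, and for every `u ∉ S`
there is `v ∈ S` whose neighbours outside `S` are exactly `{u}`. -/
def IsSuperDominatingSet {V : Type*} (G : SimpleGraph V) (S : Finset V) : Prop :=
  (∀ u ∉ S, ∃ v ∈ S, G.Adj v u) ∧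
  ∀ u ∉ S, ∃ v ∈ S, ∀ w, (G.Adj v w ∧ w ∉ S) ↔ w = u

/-- The super domination number of `G`. -/
noncomputable def superDominationNumber {V : Type*} [Fintype V] (G : SimpleGraph V) : ℕ :=
  sInf {n | ∃ S : Finset V, IsSuperDominatingSet G S ∧ S.card = n}

/-- The bouquet `B(G₁,…,Gₙ)` of the graphs `G i` with respect to the vertices
`x i ∈ V(G i)`: the one-point union identifying all the `x i` into the single
common vertex `none`. -/
def bouquet {n : ℕ} {V : Fin n → Type*} (G : ∀ i, SimpleGraph (V i))
    (x : ∀ i, V i) : SimpleGraph (Option (Σ i : Fin n, {v : V i // v ≠ x i})) :=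
  SimpleGraph.fromRel (fun u w =>
    match u, w with
    | none, some b => (G b.1).Adj (x b.1) b.2.1
    | some b, some b' => ∃ h : b.1 = b'.1, (G b'.1).Adj (h ▸ b.2.1) b'.2.1
    | _, _ => False)

section helpers
variable {α : Type*} [Fintype α] (H : SimpleGraph α)

lemma isSDS_univ : IsSuperDominatingSet H Finset.univ := by
  constructor <;> intro u hu <;> exact absurd (Finset.mem_univ u) hu

lemma isSDS_of_witness {S : Finset α}
    (h : ∀ u ∉ S, ∃ v ∈ S, ∀ w, (H.Adj v w ∧ w ∉ S) ↔ w = u) :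
    IsSuperDominatingSet H S := by
  refine ⟨fun u hu => ?_, h⟩
  obtain ⟨v, hv, hw⟩ := h u hu
  exact ⟨v, hv, ((hw u).mpr rfl).1⟩

lemma sdn_le {S : Finset α} (h : IsSuperDominatingSet H S) :
    superDominationNumber H ≤ S.card := Nat.sInf_le ⟨S, h, rfl⟩

lemma sdn_spec : ∃ S : Finset α, IsSuperDominatingSet H S ∧
    S.card = superDominationNumber H := by
  have h : {m | ∃ S : Finset α, IsSuperDominatingSet H S ∧ S.card = m}.Nonempty :=
    ⟨Finset.univ.card, Finset.univ, isSDS_univ H, rfl⟩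
  exact Nat.sInf_mem h

lemma one_le_sdn [Nonempty α] : 1 ≤ superDominationNumber H := by
  obtain ⟨S, hS, hcard⟩ := sdn_spec H
  rcases Nat.eq_zero_or_pos (superDominationNumber H) with h0 | h1
  · exfalso
    have hS0 : S = ∅ := Finset.card_eq_zero.mp (hcard.trans h0)
    obtain ⟨v, hv, -⟩ := hS.1 (Classical.arbitrary α) (by simp [hS0])
    simp [hS0] at hv
  · exact h1

lemma swap_lemma {S : Finset α} (hS : IsSuperDominatingSet H S) {r : α} (hr : r ∈ S)
    {u₀ : α} (hu₀ : u₀ ∉ S) (hw : ∀ w, (H.Adj r w ∧ w ∉ S) ↔ w = u₀) :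
    ∃ T : Finset α, IsSuperDominatingSet H T ∧ T.card = S.card ∧ r ∉ T := by
  classical
  have key : ∀ z : α, ∃ v : α, z ∉ S → z ≠ u₀ →
      v ∈ S ∧ ∀ w, (H.Adj v w ∧ w ∉ S) ↔ w = z := by
    intro z
    by_cases hz : z ∉ S
    · obtain ⟨v, hv, hvw⟩ := hS.2 z hz
      exact ⟨v, fun _ _ => ⟨hv, hvw⟩⟩
    · exact ⟨r, fun h _ => absurd h hz⟩
  choose f hf using key
  set D : Finset α := Sᶜ.erase u₀ with hD
  have hDmem : ∀ z, z ∈ D ↔ z ≠ u₀ ∧ z ∉ S := by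
    intro z; simp [hD]
  have hfS : ∀ z ∈ D, f z ∈ S := fun z hz =>
    (hf z ((hDmem z).1 hz).2 ((hDmem z).1 hz).1).1
  have hfw : ∀ z ∈ D, ∀ w, (H.Adj (f z) w ∧ w ∉ S) ↔ w = z := fun z hz =>
    (hf z ((hDmem z).1 hz).2 ((hDmem z).1 hz).1).2
  have hfadj : ∀ z ∈ D, H.Adj (f z) z := fun z hz => (((hfw z hz) z).mpr rfl).1
  have hfr : ∀ z ∈ D, f z ≠ r := by
    intro z hz hfzr
    have h1 : H.Adj r z ∧ z ∉ S := by
      rw [← hfzr]; exact ⟨hfadj z hz, ((hDmem z).1 hz).2⟩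
    exact ((hDmem z).1 hz).1 ((hw z).mp h1)
  set U : Finset α := insert r (D.image f) with hU
  set T : Finset α := Uᶜ with hT
  have hmemT : ∀ w, w ∉ T ↔ (w = r ∨ ∃ z ∈ D, f z = w) := by
    intro w; simp [hT, hU]; tauto
  have hrT : r ∉ T := (hmemT r).2 (Or.inl rfl)
  have hrim : r ∉ D.image f := by
    simp only [Finset.mem_image]
    rintro ⟨z, hz, hfz⟩
    exact hfr z hz hfz
  have hinj : Set.InjOn f D := by
    intro a ha b hb hab
    have h1 : H.Adj (f b) a ∧ a ∉ S := by
      rw [← hab]; exact ⟨hfadj a ha, ((hDmem a).1 ha).2⟩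
    exact ((hfw b hb) a).mp h1
  have hu₀c : u₀ ∈ Sᶜ := by simp [hu₀]
  have hUcard : U.card = Sᶜ.card := by
    rw [hU, Finset.card_insert_of_notMem hrim, Finset.card_image_of_injOn hinj, hD,
      Finset.card_erase_of_mem hu₀c]
    have : 0 < Sᶜ.card := Finset.card_pos.mpr ⟨u₀, hu₀c⟩
    omega
  have hTcard : T.card = S.card := by
    have h1 : T.card = Fintype.card α - U.card := by rw [hT, Finset.card_compl]
    have h2 : Sᶜ.card = Fintype.card α - S.card := Finset.card_compl S
    have h3 : S.card ≤ Fintype.card α := Finset.card_le_univ S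
    have h4 : U.card ≤ Fintype.card α := Finset.card_le_univ U
    omega
  refine ⟨T, isSDS_of_witness H ?_, hTcard, hrT⟩
  intro u hu
  rcases (hmemT u).1 hu with rfl | ⟨z, hz, rfl⟩
  · -- u = r, witness u₀
    have hu₀T : u₀ ∈ T := by
      by_contra hc
      rcases (hmemT u₀).1 hc with h | ⟨z, hz, hfz⟩
      · exact hu₀ (h ▸ hr)
      · exact hu₀ (hfz ▸ hfS z hz)
    refine ⟨u₀, hu₀T, fun w => ⟨?_, ?_⟩⟩
    · rintro ⟨hadj, hwT⟩
      rcases (hmemT w).1 hwT with rfl | ⟨z, hz, rfl⟩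
      · rfl
      · exfalso
        have : u₀ = z := ((hfw z hz) u₀).mp ⟨hadj.symm, hu₀⟩
        exact ((hDmem z).1 hz).1 this.symm
    · rintro rfl
      exact ⟨((hw u₀).mpr rfl).1.symm, hu⟩
  · -- u = f z, witness z
    have hzT : z ∈ T := by
      by_contra hc
      rcases (hmemT z).1 hc with h | ⟨z', hz', hfz'⟩
      · exact ((hDmem z).1 hz).2 (h ▸ hr)
      · exact ((hDmem z).1 hz).2 (hfz' ▸ hfS z' hz')
    refine ⟨z, hzT, fun w => ⟨?_, ?_⟩⟩
    · rintro ⟨hadj, hwT⟩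
      rcases (hmemT w).1 hwT with rfl | ⟨z', hz', rfl⟩
      · exfalso
        exact ((hDmem z).1 hz).1 ((hw z).mp ⟨hadj.symm, ((hDmem z).1 hz).2⟩)
      · have : z = z' := ((hfw z' hz') z).mp ⟨hadj.symm, ((hDmem z).1 hz).2⟩
        rw [this]
    · rintro rfl
      exact ⟨(hfadj z hz).symm, hu⟩

end helpers

section badj
variable {n : ℕ} {V : Fin n → Type*} (G : ∀ i, SimpleGraph (V i)) (x : ∀ i, V i)

lemma bouquet_adj_none_some (b : Σ i : Fin n, {v : V i // v ≠ x i}) :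
    (bouquet G x).Adj none (some b) ↔ (G b.1).Adj (x b.1) b.2.1 := by
  simp only [bouquet, SimpleGraph.fromRel_adj]
  constructor
  · rintro ⟨hne, h | h⟩
    · exact h
    · exact h.elim
  · intro h
    exact ⟨fun hc => (nomatch hc), Or.inl h⟩

lemma bouquet_adj_some_none (b : Σ i : Fin n, {v : V i // v ≠ x i}) :
    (bouquet G x).Adj (some b) none ↔ (G b.1).Adj (x b.1) b.2.1 := by
  rw [SimpleGraph.adj_comm]
  exact bouquet_adj_none_some G x b

lemma bouquet_adj_fst {b b' : Σ i : Fin n, {v : V i // v ≠ x i}}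
    (h : (bouquet G x).Adj (some b) (some b')) : b.1 = b'.1 := by
  simp only [bouquet, SimpleGraph.fromRel_adj] at h
  rcases h with ⟨-, ⟨h, -⟩ | ⟨h, -⟩⟩
  exacts [h, h.symm]

lemma bouquet_adj_some_some {i : Fin n} (v w : {v : V i // v ≠ x i}) :
    (bouquet G x).Adj (some ⟨i, v⟩) (some ⟨i, w⟩) ↔ (G i).Adj v.1 w.1 := by
  simp only [bouquet, SimpleGraph.fromRel_adj]
  constructor
  · rintro ⟨hne, ⟨-, ha⟩ | ⟨-, ha⟩⟩
    · exact ha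
    · exact ha.symm
  · intro h
    refine ⟨?_, Or.inl ⟨trivial, h⟩⟩
    intro hc
    have hc1 := Option.some.inj hc
    have hvw : v = w := eq_of_heq (Sigma.ext_iff.mp hc1).2
    exact h.ne (congrArg Subtype.val hvw)

end badj

section cards
variable {n : ℕ} {V : Fin n → Type*} [∀ i, Fintype (V i)] [∀ i, DecidableEq (V i)]
  (x : ∀ i, V i)

lemma card_le_sum_parts (hn : 1 ≤ n)
    {SB : Finset (Option (Σ i : Fin n, {v : V i // v ≠ x i}))}
    (T : ∀ i, Finset (V i))
    (h : ∀ b : Σ i : Fin n, {v : V i // v ≠ x i}, some b ∈ SB → b.2.1 ∈ T b.1)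
    (hnone : none ∉ SB) :
    SB.card ≤ ∑ i, (T i).card := by
  classical
  rw [← Finset.card_sigma]
  apply Finset.card_le_card_of_injOn
    (fun w => match w with
      | none => ⟨⟨0, hn⟩, x ⟨0, hn⟩⟩
      | some b => ⟨b.1, b.2.1⟩)
  · intro w hw
    cases w with
    | none => exact absurd hw hnone
    | some b =>
      simp only [Finset.mem_coe, Finset.mem_sigma, Finset.mem_univ, true_and]
      exact h b hw
  · intro w hw w' hw' heq
    cases w with
    | none => exact absurd hw hnone
    | some b =>
      cases w' with
      | none => exact absurd hw' hnone
      | some b' =>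
        obtain ⟨i, v⟩ := b
        obtain ⟨i', v'⟩ := b'
        dsimp only at heq
        have h1 : i = i' := (Sigma.ext_iff.mp heq).1
        subst h1
        have h2 : v.1 = v'.1 := eq_of_heq (Sigma.ext_iff.mp heq).2
        have h3 : v = v' := Subtype.ext h2
        rw [h3]

lemma sum_parts_le_card
    {SB : Finset (Option (Σ i : Fin n, {v : V i // v ≠ x i}))}
    (Q : ∀ i, Finset (V i))
    (h : ∀ i, ∀ v ∈ Q i, ∃ hv : v ≠ x i, some ⟨i, ⟨v, hv⟩⟩ ∈ SB) :
    ∑ i, (Q i).card ≤ SB.card := by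
  classical
  rw [← Finset.card_sigma]
  apply Finset.card_le_card_of_injOn
    (fun p : Σ i : Fin n, V i =>
      if hv : p.2 ≠ x p.1 then some ⟨p.1, ⟨p.2, hv⟩⟩ else none)
  · rintro ⟨i, v⟩ hp
    obtain ⟨hv, hmem⟩ := h i v (Finset.mem_sigma.mp hp).2
    dsimp only
    rw [dif_pos hv]
    exact hmem
  · rintro ⟨i, v⟩ hp ⟨i', v'⟩ hp' heq
    obtain ⟨hv, -⟩ := h i v (Finset.mem_sigma.mp hp).2
    obtain ⟨hv', -⟩ := h i' v' (Finset.mem_sigma.mp hp').2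
    dsimp only at heq
    rw [dif_pos hv, dif_pos hv'] at heq
    have h1 := Option.some.inj heq
    have h2 : i = i' := (Sigma.ext_iff.mp h1).1
    subst h2
    have h3 : v = v' := congrArg Subtype.val (eq_of_heq (Sigma.ext_iff.mp h1).2)
    rw [h3]

end cards



/-- for pairwise disjoint connected graphs `G₁,…,Gₙ` and the bouquet
`B(G₁,…,Gₙ)` obtained by identifying chosen vertices `x i ∈ V(G i)` into one vertex,
`(Σ γ_sp(G i)) - n + 1 ≤ γ_sp(B(G₁,…,Gₙ)) ≤ Σ γ_sp(G i)`. -/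
theorem stmt_16 {n : ℕ} (hn : 1 ≤ n) {V : Fin n → Type*} [∀ i, Fintype (V i)]
    [∀ i, DecidableEq (V i)] (G : ∀ i, SimpleGraph (V i))
    (hG : ∀ i, (G i).Connected) (x : ∀ i, V i) :
    (∑ i, superDominationNumber (G i)) - n + 1 ≤
      superDominationNumber (bouquet G x) ∧
    superDominationNumber (bouquet G x) ≤ ∑ i, superDominationNumber (G i) := by
  classical
  constructor
  · -- LOWER BOUND
    obtain ⟨SB, hSB, hSBcard⟩ := sdn_spec (bouquet G x)
    rw [← hSBcard]
    set Q : ∀ i, Finset (V i) := fun i =>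
      Finset.univ.filter (fun v => ∃ hv : v ≠ x i, some ⟨i, ⟨v, hv⟩⟩ ∈ SB) with hQ
    have hQmem : ∀ i, ∀ v : {v : V i // v ≠ x i}, v.1 ∈ Q i ↔ some ⟨i, v⟩ ∈ SB := by
      intro i v
      simp only [hQ, Finset.mem_filter, Finset.mem_univ, true_and]
      constructor
      · rintro ⟨hv, hmem⟩
        exact hmem
      · intro hmem
        exact ⟨v.2, hmem⟩
    have hQex : ∀ i, ∀ v ∈ Q i, ∃ hv : v ≠ x i, some ⟨i, ⟨v, hv⟩⟩ ∈ SB := by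
      intro i v hv
      simpa [hQ] using hv
    have hmain : ∀ i, IsSuperDominatingSet (G i) (insert (x i) (Q i)) := by
      intro i
      apply isSDS_of_witness
      intro u hu
      have hune : u ≠ x i := fun h => hu (h ▸ Finset.mem_insert_self (x i) (Q i))
      have huQ : u ∉ Q i := fun h => hu (Finset.mem_insert_of_mem h)
      have hub : some (⟨i, ⟨u, hune⟩⟩ : Σ i : Fin n, {v : V i // v ≠ x i}) ∉ SB :=
        fun h => huQ ((hQmem i ⟨u, hune⟩).2 h)
      obtain ⟨vb, hvb, hwb⟩ := hSB.2 _ hub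
      have hadj : (bouquet G x).Adj vb (some ⟨i, ⟨u, hune⟩⟩) := ((hwb _).mpr rfl).1
      cases vb with
      | none =>
        refine ⟨x i, Finset.mem_insert_self _ _, fun w => ⟨?_, ?_⟩⟩
        · rintro ⟨haw, hwmem⟩
          have hwne : w ≠ x i := fun h => hwmem (h ▸ Finset.mem_insert_self (x i) (Q i))
          have hwQ : w ∉ Q i := fun h => hwmem (Finset.mem_insert_of_mem h)
          have hwSB : some (⟨i, ⟨w, hwne⟩⟩ : Σ i : Fin n, {v : V i // v ≠ x i}) ∉ SB :=
            fun h => hwQ ((hQmem i ⟨w, hwne⟩).2 h)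
          have hadjB : (bouquet G x).Adj none (some ⟨i, ⟨w, hwne⟩⟩) :=
            (bouquet_adj_none_some G x _).2 haw
          have heq := (hwb _).mp ⟨hadjB, hwSB⟩
          have h1 := Option.some.inj heq
          exact congrArg Subtype.val (eq_of_heq (Sigma.ext_iff.mp h1).2)
        · rintro rfl
          exact ⟨(bouquet_adj_none_some G x _).1 hadj, hu⟩
      | some c =>
        have hci := bouquet_adj_fst G x hadj
        obtain ⟨i', cv⟩ := c
        dsimp only at hci
        have hci2 : i = i' := hci.symm
        subst hci2
        refine ⟨cv.1, Finset.mem_insert_of_mem ((hQmem _ cv).2 hvb), fun w => ⟨?_, ?_⟩⟩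
        · rintro ⟨haw, hwmem⟩
          have hwne : w ≠ x _ := fun h => hwmem (h ▸ Finset.mem_insert_self _ (Q _))
          have hwQ : w ∉ Q _ := fun h => hwmem (Finset.mem_insert_of_mem h)
          have hwSB : some (⟨_, ⟨w, hwne⟩⟩ : Σ i : Fin n, {v : V i // v ≠ x i}) ∉ SB :=
            fun h => hwQ ((hQmem _ ⟨w, hwne⟩).2 h)
          have hadjB : (bouquet G x).Adj (some ⟨_, cv⟩) (some ⟨_, ⟨w, hwne⟩⟩) :=
            (bouquet_adj_some_some G x cv ⟨w, hwne⟩).2 haw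
          have heq := (hwb _).mp ⟨hadjB, hwSB⟩
          have h1 := Option.some.inj heq
          exact congrArg Subtype.val (eq_of_heq (Sigma.ext_iff.mp h1).2)
        · rintro rfl
          exact ⟨(bouquet_adj_some_some G x cv _).1 hadj, hu⟩
    have hsi : ∀ i, superDominationNumber (G i) ≤ (Q i).card + 1 := by
      intro i
      calc superDominationNumber (G i) ≤ (insert (x i) (Q i)).card := sdn_le _ (hmain i)
        _ ≤ (Q i).card + 1 := Finset.card_insert_le _ _
    by_cases hxSB : (none : Option (Σ i : Fin n, {v : V i // v ≠ x i})) ∈ SB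
    · -- x is in SB
      have hsum : ∑ i, (Q i).card ≤ (SB.erase none).card := by
        apply sum_parts_le_card x Q
        intro i v hv
        obtain ⟨hvne, hmem⟩ := hQex i v hv
        exact ⟨hvne, Finset.mem_erase.2 ⟨Option.some_ne_none _, hmem⟩⟩
      have hcard1 : (SB.erase none).card = SB.card - 1 := Finset.card_erase_of_mem hxSB
      have hSB1 : 1 ≤ SB.card := Finset.card_pos.2 ⟨none, hxSB⟩
      have h2 : ∑ i, superDominationNumber (G i) ≤ (∑ i, (Q i).card) + n := by
        calc ∑ i, superDominationNumber (G i) ≤ ∑ i : Fin n, ((Q i).card + 1) :=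
              Finset.sum_le_sum (fun i _ => hsi i)
          _ = (∑ i, (Q i).card) + n := by
              rw [Finset.sum_add_distrib, Finset.sum_const, Finset.card_univ,
                Fintype.card_fin, smul_eq_mul, mul_one]
      omega
    · -- x is not in SB
      obtain ⟨vb, hvb, hwb⟩ := hSB.2 none hxSB
      cases vb with
      | none => exact absurd hvb hxSB
      | some b =>
      obtain ⟨j, bv⟩ := b
      have hspecial : IsSuperDominatingSet (G j) (Q j) := by
        apply isSDS_of_witness
        intro u hu
        by_cases hux : u = x j
        · subst hux
          refine ⟨bv.1, (hQmem j bv).2 hvb, fun w => ⟨?_, ?_⟩⟩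
          · rintro ⟨haw, hwQ⟩
            by_cases hwx : w = x j
            · exact hwx
            · exfalso
              have hwSB : some (⟨j, ⟨w, hwx⟩⟩ : Σ i : Fin n, {v : V i // v ≠ x i}) ∉ SB :=
                fun h => hwQ ((hQmem j ⟨w, hwx⟩).2 h)
              have hadjB : (bouquet G x).Adj (some ⟨j, bv⟩) (some ⟨j, ⟨w, hwx⟩⟩) :=
                (bouquet_adj_some_some G x bv ⟨w, hwx⟩).2 haw
              exact nomatch ((hwb _).mp ⟨hadjB, hwSB⟩)
          · rintro rfl
            have hadjB : (bouquet G x).Adj (some ⟨j, bv⟩) none := ((hwb none).mpr rfl).1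
            exact ⟨((bouquet_adj_some_none G x ⟨j, bv⟩).1 hadjB).symm, hu⟩
        · have hub : some (⟨j, ⟨u, hux⟩⟩ : Σ i : Fin n, {v : V i // v ≠ x i}) ∉ SB :=
            fun h => hu ((hQmem j ⟨u, hux⟩).2 h)
          obtain ⟨vb', hvb', hwb'⟩ := hSB.2 _ hub
          have hadj' : (bouquet G x).Adj vb' (some ⟨j, ⟨u, hux⟩⟩) := ((hwb' _).mpr rfl).1
          cases vb' with
          | none => exact absurd hvb' hxSB
          | some c =>
            have hci := bouquet_adj_fst G x hadj'
            obtain ⟨j', cv⟩ := c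
            dsimp only at hci
            have hci2 : j = j' := hci.symm
            subst hci2
            refine ⟨cv.1, (hQmem j cv).2 hvb', fun w => ⟨?_, ?_⟩⟩
            · rintro ⟨haw, hwQ⟩
              by_cases hwx : w = x j
              · exfalso
                subst hwx
                have hadjB : (bouquet G x).Adj (some ⟨j, cv⟩) none :=
                  (bouquet_adj_some_none G x ⟨j, cv⟩).2 haw.symm
                exact nomatch ((hwb' none).mp ⟨hadjB, hxSB⟩)
              · have hwSB : some (⟨j, ⟨w, hwx⟩⟩ : Σ i : Fin n, {v : V i // v ≠ x i}) ∉ SB :=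
                  fun h => hwQ ((hQmem j ⟨w, hwx⟩).2 h)
                have hadjB : (bouquet G x).Adj (some ⟨j, cv⟩) (some ⟨j, ⟨w, hwx⟩⟩) :=
                  (bouquet_adj_some_some G x cv ⟨w, hwx⟩).2 haw
                have heq := (hwb' _).mp ⟨hadjB, hwSB⟩
                have h1 := Option.some.inj heq
                exact congrArg Subtype.val (eq_of_heq (Sigma.ext_iff.mp h1).2)
            · rintro rfl
              exact ⟨(bouquet_adj_some_some G x cv _).1 hadj', hu⟩
      have hSBpos : 1 ≤ SB.card := Finset.card_pos.2 ⟨_, hvb⟩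
      have hsum : ∑ i, (Q i).card ≤ SB.card := sum_parts_le_card x Q hQex
      have hsj : superDominationNumber (G j) ≤ (Q j).card := sdn_le _ hspecial
      have e1 : ∑ i, superDominationNumber (G i) =
          superDominationNumber (G j) + ∑ i ∈ Finset.univ.erase j, superDominationNumber (G i) :=
        (Finset.add_sum_erase _ _ (Finset.mem_univ j)).symm
      have e2 : ∑ i, (Q i).card =
          (Q j).card + ∑ i ∈ Finset.univ.erase j, (Q i).card :=
        (Finset.add_sum_erase _ _ (Finset.mem_univ j)).symm
      have e3 : ∑ i ∈ Finset.univ.erase j, superDominationNumber (G i) ≤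
          ∑ i ∈ Finset.univ.erase j, ((Q i).card + 1) :=
        Finset.sum_le_sum (fun i _ => hsi i)
      have e4 : ∑ i ∈ Finset.univ.erase j, ((Q i).card + 1) =
          (∑ i ∈ Finset.univ.erase j, (Q i).card) + (n - 1) := by
        rw [Finset.sum_add_distrib, Finset.sum_const, Finset.card_erase_of_mem (Finset.mem_univ j),
          Finset.card_univ, Fintype.card_fin, smul_eq_mul, mul_one]
      omega
  · -- UPPER BOUND
    have hdata : ∀ i, ∃ T : Finset (V i), x i ∉ T ∧
        ((∃ S : Finset (V i), IsSuperDominatingSet (G i) S ∧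
            S.card ≤ superDominationNumber (G i) ∧ x i ∉ S) →
          T.card ≤ superDominationNumber (G i)) ∧
        (¬ (∃ S : Finset (V i), IsSuperDominatingSet (G i) S ∧
            S.card ≤ superDominationNumber (G i) ∧ x i ∉ S) →
          T.card + 1 ≤ superDominationNumber (G i)) ∧
        (∀ u, u ∉ T → u ≠ x i → ∃ v ∈ T, ∀ w, w ≠ x i →
          (((G i).Adj v w ∧ w ∉ T) ↔ w = u)) := by
      intro i
      by_cases hgi : ∃ S : Finset (V i), IsSuperDominatingSet (G i) S ∧
          S.card ≤ superDominationNumber (G i) ∧ x i ∉ S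
      · obtain ⟨S, hS, hcard, hxS⟩ := hgi
        refine ⟨S, hxS, fun _ => hcard, fun h => absurd ⟨S, hS, hcard, hxS⟩ h, ?_⟩
        intro u huT hux
        obtain ⟨v, hv, hw⟩ := hS.2 u huT
        exact ⟨v, hv, fun w _ => hw w⟩
      · obtain ⟨S, hS, hScard⟩ := sdn_spec (G i)
        have hxS : x i ∈ S := by
          by_contra hxS
          exact hgi ⟨S, hS, le_of_eq hScard, hxS⟩
        have hwit : ∀ u, u ∉ S → ∃ v ∈ S, v ≠ x i ∧
            ∀ w, ((G i).Adj v w ∧ w ∉ S) ↔ w = u := by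
          intro u hu
          obtain ⟨v, hv, hw⟩ := hS.2 u hu
          refine ⟨v, hv, ?_, hw⟩
          rintro rfl
          obtain ⟨T, hT, hTcard, hxT⟩ := swap_lemma (G i) hS hxS hu hw
          exact hgi ⟨T, hT, le_of_eq (hTcard.trans hScard), hxT⟩
        refine ⟨S.erase (x i), Finset.notMem_erase _ _,
          fun h => absurd h hgi, ?_, ?_⟩
        · intro _
          rw [Finset.card_erase_of_mem hxS]
          have h1 : 1 ≤ S.card := Finset.card_pos.2 ⟨_, hxS⟩
          omega
        · intro u huT hux
          have huS : u ∉ S := fun huS => huT (Finset.mem_erase.2 ⟨hux, huS⟩)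
          obtain ⟨v, hv, hvx, hw⟩ := hwit u huS
          refine ⟨v, Finset.mem_erase.2 ⟨hvx, hv⟩, ?_⟩
          intro w hwx
          rw [← hw w]
          constructor
          · rintro ⟨ha, hwT⟩
            exact ⟨ha, fun hws => hwT (Finset.mem_erase.2 ⟨hwx, hws⟩)⟩
          · rintro ⟨ha, hwS⟩
            exact ⟨ha, fun hwT => hwS (Finset.mem_erase.1 hwT).2⟩
    by_cases hall : ∀ i, ∃ S : Finset (V i), IsSuperDominatingSet (G i) S ∧
        S.card ≤ superDominationNumber (G i) ∧ x i ∉ S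
    · -- all parts green
      choose C hC1 hC2 hC3 using hall
      set SB : Finset (Option (Σ i : Fin n, {v : V i // v ≠ x i})) :=
        Finset.univ.filter (fun w => ∃ b, w = some b ∧ b.2.1 ∈ C b.1) with hSBdef
      have hnone : (none : Option (Σ i : Fin n, {v : V i // v ≠ x i})) ∉ SB := by
        simp [hSBdef]
      have hmem : ∀ b : Σ i : Fin n, {v : V i // v ≠ x i},
          some b ∈ SB ↔ b.2.1 ∈ C b.1 := by
        intro b
        rw [hSBdef, Finset.mem_filter]
        simp only [Finset.mem_univ, true_and, Option.some.injEq]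
        constructor
        · rintro ⟨b', rfl, hmemb⟩
          exact hmemb
        · intro h
          exact ⟨b, rfl, h⟩
      have hSDS : IsSuperDominatingSet (bouquet G x) SB := by
        apply isSDS_of_witness
        intro u hu
        cases u with
        | none =>
          obtain ⟨v, hv, hw⟩ := (hC1 ⟨0, hn⟩).2 (x ⟨0, hn⟩) (hC3 ⟨0, hn⟩)
          have hvne : v ≠ x ⟨0, hn⟩ := fun h => hC3 ⟨0, hn⟩ (h ▸ hv)
          refine ⟨some ⟨⟨0, hn⟩, ⟨v, hvne⟩⟩, (hmem _).2 hv, fun w => ⟨?_, ?_⟩⟩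
          · rintro ⟨haw, hwSB⟩
            cases w with
            | none => rfl
            | some c =>
              exfalso
              have hci := bouquet_adj_fst G x haw
              obtain ⟨i', cv⟩ := c
              dsimp only at hci
              subst hci
              have hadj := (bouquet_adj_some_some G x ⟨v, hvne⟩ cv).1 haw
              have hcC : cv.1 ∉ C _ := fun h => hwSB ((hmem _).2 h)
              exact cv.2 ((hw cv.1).mp ⟨hadj, hcC⟩)
          · rintro rfl
            exact ⟨(bouquet_adj_some_none G x ⟨⟨0, hn⟩, ⟨v, hvne⟩⟩).2
              (((hw (x ⟨0, hn⟩)).mpr rfl).1.symm), hu⟩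
        | some b =>
          obtain ⟨i, z⟩ := b
          have hzC : z.1 ∉ C i := fun h => hu ((hmem _).2 h)
          obtain ⟨v, hv, hw⟩ := (hC1 i).2 z.1 hzC
          have hvne : v ≠ x i := fun h => hC3 i (h ▸ hv)
          refine ⟨some ⟨i, ⟨v, hvne⟩⟩, (hmem _).2 hv, fun w => ⟨?_, ?_⟩⟩
          · rintro ⟨haw, hwSB⟩
            cases w with
            | none =>
              exfalso
              have hadj := (bouquet_adj_some_none G x ⟨i, ⟨v, hvne⟩⟩).1 haw
              exact z.2 (((hw (x i)).mp ⟨hadj.symm, hC3 i⟩).symm)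
            | some c =>
              have hci := bouquet_adj_fst G x haw
              obtain ⟨i', cv⟩ := c
              dsimp only at hci
              subst hci
              have hadj := (bouquet_adj_some_some G x ⟨v, hvne⟩ cv).1 haw
              have hcC : cv.1 ∉ C i := fun h => hwSB ((hmem _).2 h)
              have hcz := (hw cv.1).mp ⟨hadj, hcC⟩
              rw [show cv = z from Subtype.ext hcz]
          · rintro rfl
            exact ⟨(bouquet_adj_some_some G x ⟨v, hvne⟩ z).2 ((hw z.1).mpr rfl).1, hu⟩
      calc superDominationNumber (bouquet G x) ≤ SB.card := sdn_le _ hSDS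
        _ ≤ ∑ i, (C i).card := card_le_sum_parts x hn C (fun b hb => (hmem b).1 hb) hnone
        _ ≤ ∑ i, superDominationNumber (G i) := Finset.sum_le_sum (fun i _ => hC2 i)
    · -- some part is not green
      obtain ⟨k, hk⟩ := not_forall.mp hall
      choose T hT1 hT2 hT3 hT4 using hdata
      set F : Finset (Option (Σ i : Fin n, {v : V i // v ≠ x i})) :=
        Finset.univ.filter (fun w => ∃ b, w = some b ∧ b.2.1 ∈ T b.1) with hFdef
      set SB : Finset (Option (Σ i : Fin n, {v : V i // v ≠ x i})) :=
        insert none F with hSBdef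
      have hnoneSB : (none : Option (Σ i : Fin n, {v : V i // v ≠ x i})) ∈ SB :=
        Finset.mem_insert_self _ _
      have hmem : ∀ b : Σ i : Fin n, {v : V i // v ≠ x i},
          some b ∈ SB ↔ b.2.1 ∈ T b.1 := by
        intro b
        rw [hSBdef, Finset.mem_insert]
        simp only [hFdef, Finset.mem_filter, Finset.mem_univ, true_and, Option.some.injEq]
        constructor
        · rintro (h | ⟨b', rfl, hmemb⟩)
          · exact nomatch h
          · exact hmemb
        · intro h
          exact Or.inr ⟨b, rfl, h⟩
      have hSDS : IsSuperDominatingSet (bouquet G x) SB := by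
        apply isSDS_of_witness
        intro u hu
        cases u with
        | none => exact absurd hnoneSB hu
        | some b =>
          obtain ⟨i, z⟩ := b
          have hzT : z.1 ∉ T i := fun h => hu ((hmem _).2 h)
          obtain ⟨v, hv, hw⟩ := hT4 i z.1 hzT z.2
          have hvne : v ≠ x i := fun h => hT1 i (h ▸ hv)
          refine ⟨some ⟨i, ⟨v, hvne⟩⟩, (hmem _).2 hv, fun w => ⟨?_, ?_⟩⟩
          · rintro ⟨haw, hwSB⟩
            cases w with
            | none => exact absurd hnoneSB hwSB
            | some c =>
              have hci := bouquet_adj_fst G x haw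
              obtain ⟨i', cv⟩ := c
              dsimp only at hci
              subst hci
              have hadj := (bouquet_adj_some_some G x ⟨v, hvne⟩ cv).1 haw
              have hcT : cv.1 ∉ T i := fun h => hwSB ((hmem _).2 h)
              have hcz := (hw cv.1 cv.2).mp ⟨hadj, hcT⟩
              rw [show cv = z from Subtype.ext hcz]
          · rintro rfl
            exact ⟨(bouquet_adj_some_some G x ⟨v, hvne⟩ z).2
              ((hw z.1 z.2).mpr rfl).1, hu⟩
      have hFcard : F.card ≤ ∑ i, (T i).card := by
        apply card_le_sum_parts x hn T ?_ (by simp [hFdef])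
        intro b hb
        have : some b ∈ SB := Finset.mem_insert_of_mem hb
        exact (hmem b).1 this
      have hSBF : SB.card ≤ F.card + 1 := Finset.card_insert_le _ _
      have hTk := hT3 k hk
      have hTles : ∀ i, (T i).card ≤ superDominationNumber (G i) := by
        intro i
        by_cases hgi : ∃ S : Finset (V i), IsSuperDominatingSet (G i) S ∧
            S.card ≤ superDominationNumber (G i) ∧ x i ∉ S
        · exact hT2 i hgi
        · have := hT3 i hgi
          omega
      have e1 : ∑ i, (T i).card =
          (T k).card + ∑ i ∈ Finset.univ.erase k, (T i).card :=
        (Finset.add_sum_erase _ _ (Finset.mem_univ k)).symm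
      have e2 : ∑ i, superDominationNumber (G i) =
          superDominationNumber (G k) + ∑ i ∈ Finset.univ.erase k, superDominationNumber (G i) :=
        (Finset.add_sum_erase _ _ (Finset.mem_univ k)).symm
      have e3 : ∑ i ∈ Finset.univ.erase k, (T i).card ≤
          ∑ i ∈ Finset.univ.erase k, superDominationNumber (G i) :=
        Finset.sum_le_sum (fun i _ => hTles i)
      have hfinal : SB.card ≤ ∑ i, superDominationNumber (G i) := by omega
      exact le_trans (sdn_le _ hSDS) hfinal
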